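/- Let V(φ) = φ(0)^T P_xx φ(0) + 2∫_{-h}^0 φ(0)^T P_xz(η)φ(η)dη + ∫∫_{[-h,0]²} φ(ξ)^T P_zz(ξ,η)φ(η)dη dξ + ∫_{-h}^0 φ(η)^T P_d φ(η)dη, and define v(φ) = P_xx φ(0) + ∫_{-h}^0 P_xz(η)φ(η)dη. If x solves ẋ(t) = f(x_t) + g(x_t) and y solves ẏ(t) = f(y_t), with both having the same segment at time t, then the (upper right) derivative of V along the perturbed solution satisfies D_{(f+g)}V(x_t) = D_f V(x_t) + 2 v(x_t)^T g(x_t). -/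

import Mathlib

open Matrix intervalIntegral

set_option maxHeartbeats 1000000 in
lemma aux_dot_deriv {n : ℕ} {u w : ℝ → Fin n → ℝ} {u' : Fin n → ℝ} {t : ℝ}
    (hu : HasDerivAt u u' t) (h0 : u t = 0) (hw : ContinuousAt w t) :
    HasDerivAt (fun s => u s ⬝ᵥ w s) (u' ⬝ᵥ w t) t := by
  rw [hasDerivAt_iff_tendsto_slope] at hu ⊢
  have hdot : Continuous fun p : (Fin n → ℝ) × (Fin n → ℝ) => p.1 ⬝ᵥ p.2 :=
    Continuous.dotProduct continuous_fst continuous_snd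
  have key : Filter.Tendsto (fun s => (slope u t s) ⬝ᵥ w s) (nhdsWithin t {t}ᶜ)
      (nhds (u' ⬝ᵥ w t)) :=
    (hdot.continuousAt (x := (u', w t))).tendsto.comp
      (hu.prodMk_nhds ((hw.tendsto).mono_left nhdsWithin_le_nhds))
  refine key.congr' ?_
  filter_upwards [self_mem_nhdsWithin] with s hs
  simp only [slope_def_module, h0, sub_zero, smul_dotProduct]
  simp [h0]

lemma aux_squeeze_deriv {R N : ℝ → ℝ} {t C : ℝ} (hN : HasDerivAt N 0 t)
    (hN0 : N t = 0) (hRt : R t = 0) (hb : ∀ᶠ s in nhds t, |R s| ≤ C * N s) :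
    HasDerivAt R 0 t := by
  rw [hasDerivAt_iff_tendsto_slope] at hN ⊢
  have hNt : Filter.Tendsto (fun s => |C| * |slope N t s|) (nhdsWithin t {t}ᶜ) (nhds 0) := by
    have := hN.norm
    simp only [norm_zero, Real.norm_eq_abs] at this
    simpa using this.const_mul |C|
  apply squeeze_zero_norm' ?_ hNt
  filter_upwards [hb.filter_mono nhdsWithin_le_nhds, self_mem_nhdsWithin] with s hs hst
  have h1 : slope R t s = (s - t)⁻¹ * R s := by simp [slope_def_field, hRt, div_eq_inv_mul]
  have h2 : |slope N t s| = |s - t|⁻¹ * |N s| := by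
    rw [slope_def_field, hN0, sub_zero, abs_div, div_eq_inv_mul]
  rw [Real.norm_eq_abs, h1, abs_mul, abs_inv, h2, mul_comm |C| _, mul_assoc]
  apply mul_le_mul_of_nonneg_left ?_ (by positivity)
  calc |R s| ≤ C * N s := hs
    _ ≤ |C * N s| := le_abs_self _
    _ = |C| * |N s| := abs_mul _ _
    _ = |N s| * |C| := mul_comm _ _

lemma aux_abs_dot_mulVec_le {n : ℕ} {a b : Fin n → ℝ} {M : Matrix (Fin n) (Fin n) ℝ}
    {ca cm cb : ℝ} (ha : ∀ i, |a i| ≤ ca) (hM : ∀ i j, |M i j| ≤ cm) (hb : ∀ j, |b j| ≤ cb) :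
    |a ⬝ᵥ (M *ᵥ b)| ≤ (n : ℝ) ^ 2 * ca * cm * cb := by
  rcases Nat.eq_zero_or_pos n with hn | hn
  · subst hn; simp [dotProduct]
  have hca : 0 ≤ ca := le_trans (abs_nonneg _) (ha ⟨0, hn⟩)
  have hcm : 0 ≤ cm := le_trans (abs_nonneg _) (hM ⟨0, hn⟩ ⟨0, hn⟩)
  have hcb : 0 ≤ cb := le_trans (abs_nonneg _) (hb ⟨0, hn⟩)
  have step : ∀ i, |(M *ᵥ b) i| ≤ (n : ℝ) * (cm * cb) := by
    intro i
    calc |∑ j, M i j * b j| ≤ ∑ j, |M i j * b j| := Finset.abs_sum_le_sum_abs _ _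
      _ ≤ ∑ _j : Fin n, cm * cb := by
          refine Finset.sum_le_sum fun j _ => ?_
          rw [abs_mul]; exact mul_le_mul (hM i j) (hb j) (abs_nonneg _) hcm
      _ = (n : ℝ) * (cm * cb) := by simp [mul_comm]
  calc |a ⬝ᵥ (M *ᵥ b)| ≤ ∑ i, |a i * (M *ᵥ b) i| := Finset.abs_sum_le_sum_abs _ _
    _ ≤ ∑ _i : Fin n, ca * ((n : ℝ) * (cm * cb)) := by
        refine Finset.sum_le_sum fun i _ => ?_
        rw [abs_mul]
        exact mul_le_mul (ha i) (step i) (abs_nonneg _) hca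
    _ = (n : ℝ) * (ca * ((n : ℝ) * (cm * cb))) := by simp [mul_comm]
    _ = (n : ℝ) ^ 2 * ca * cm * cb := by ring

lemma aux_dot_integral {n : ℕ} (a : Fin n → ℝ) (v : ℝ → Fin n → ℝ) (hv : Continuous v)
    (lo hi : ℝ) :
    a ⬝ᵥ (∫ η in lo..hi, v η) = ∫ η in lo..hi, a ⬝ᵥ v η := by
  have hint : IntervalIntegrable v MeasureTheory.volume lo hi := hv.intervalIntegrable _ _
  have happ : ∀ i, (∫ η in lo..hi, v η) i = ∫ η in lo..hi, v η i := by
    intro i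
    exact ((ContinuousLinearMap.proj (R := ℝ) (φ := fun _ : Fin n => ℝ)
      i).intervalIntegral_comp_comm hint).symm
  simp only [dotProduct, happ, ← intervalIntegral.integral_const_mul]
  rw [← intervalIntegral.integral_finset_sum]
  intro i _
  exact ((continuous_const.mul ((continuous_apply i).comp hv)).intervalIntegrable _ _)

lemma aux_dot_mulVec_transpose {n : ℕ} (a c : Fin n → ℝ) (B : Matrix (Fin n) (Fin n) ℝ) :
    a ⬝ᵥ (B.transpose *ᵥ c) = c ⬝ᵥ (B *ᵥ a) := by
  rw [Matrix.mulVec_transpose, dotProduct_comm, ← Matrix.dotProduct_mulVec]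

lemma aux_cont_dm {n : ℕ} {u v : ℝ → Fin n → ℝ} {P : ℝ → Matrix (Fin n) (Fin n) ℝ}
    (hu : Continuous u) (hP : Continuous P) (hv : Continuous v) :
    Continuous fun η => u η ⬝ᵥ (P η *ᵥ v η) :=
  hu.dotProduct (hP.matrix_mulVec hv)

lemma aux_entry_bound {n : ℕ} {X : Type*} [TopologicalSpace X]
    {P : X → Matrix (Fin n) (Fin n) ℝ} (hP : Continuous P) {s : Set X} (hs : IsCompact s) :
    ∃ C, ∀ q ∈ s, ∀ i j, |P q i j| ≤ C := by
  obtain ⟨C, hC⟩ := hs.exists_bound_of_continuousOn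
    (Continuous.continuousOn (show Continuous fun q => ∑ i, ∑ j, |P q i j| from
      continuous_finset_sum _ fun i _ =>
        continuous_finset_sum _ fun j _ => (hP.matrix_elem i j).abs))
  refine ⟨C, fun q hq i j => ?_⟩
  have h1 : |P q i j| ≤ ∑ j', |P q i j'| :=
    Finset.single_le_sum (f := fun j' => |P q i j'|) (fun _ _ => abs_nonneg _)
      (Finset.mem_univ j)
  have h2 : (∑ j', |P q i j'|) ≤ ∑ i', ∑ j', |P q i' j'| :=
    Finset.single_le_sum (f := fun i' => ∑ j', |P q i' j'|)
      (fun _ _ => Finset.sum_nonneg fun _ _ => abs_nonneg _) (Finset.mem_univ i)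
  have h3 := hC q hq
  rw [Real.norm_eq_abs] at h3
  exact (h1.trans h2).trans ((le_abs_self _).trans h3)

lemma aux_flatten {n : ℕ} {h : ℝ}
    (Pxx Pd : Matrix (Fin n) (Fin n) ℝ)
    (Pxz : ℝ → Matrix (Fin n) (Fin n) ℝ) (hPxz : Continuous Pxz)
    (Pzz : ℝ → ℝ → Matrix (Fin n) (Fin n) ℝ)
    (hPzzc : Continuous fun q : ℝ × ℝ => Pzz q.1 q.2)
    (x : ℝ → Fin n → ℝ) (hxc : Continuous x) (s : ℝ) :
    (x (s + 0) ⬝ᵥ (Pxx *ᵥ x (s + 0))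
      + 2 * ∫ η in (-h)..0, x (s + 0) ⬝ᵥ (Pxz η *ᵥ x (s + η))
      + ∫ ξ in (-h)..0, ∫ η in (-h)..0, x (s + ξ) ⬝ᵥ (Pzz ξ η *ᵥ x (s + η))
      + ∫ η in (-h)..0, x (s + η) ⬝ᵥ (Pd *ᵥ x (s + η)))
    = x s ⬝ᵥ (Pxx *ᵥ x s)
      + 2 * (∫ η in (-h)..0, x s ⬝ᵥ (Pxz η *ᵥ x (s + η)))
      + (2*h) * (∫ ξ in (-h)..0, (∫ η in (-h)..0, x (s + ξ) ⬝ᵥ (Pzz ξ η *ᵥ x (s + η))))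
      + (2*h*h*h) * (∫ η in (-h)..0, x (s + η) ⬝ᵥ (Pd *ᵥ x (s + η))) := by
  have hsη : Continuous fun η : ℝ => x (s + η) := hxc.comp (continuous_const.add continuous_id)
  set p : ℝ := ∫ η in (-h)..0, x (s + η) ⬝ᵥ (Pd *ᵥ x (s + η)) with hp
  have step1 : ∀ ξ : ℝ,
      (∫ η in (-h)..0, (x (s + ξ) ⬝ᵥ (Pzz ξ η *ᵥ x (s + η)) + p))
        = (∫ η in (-h)..0, x (s + ξ) ⬝ᵥ (Pzz ξ η *ᵥ x (s + η))) + h * p := by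
    intro ξ
    have hint : IntervalIntegrable (fun η => x (s + ξ) ⬝ᵥ (Pzz ξ η *ᵥ x (s + η)))
        MeasureTheory.volume (-h) 0 := by
      apply Continuous.intervalIntegrable
      exact aux_cont_dm continuous_const (hPzzc.comp (Continuous.prodMk_right ξ)) hsη
    rw [intervalIntegral.integral_add hint intervalIntegrable_const]
    simp [smul_eq_mul, sub_neg_eq_add]
  have hcontin : Continuous fun ξ => ∫ η in (-h)..0, x (s + ξ) ⬝ᵥ (Pzz ξ η *ᵥ x (s + η)) := by
    apply intervalIntegral.continuous_parametric_intervalIntegral_of_continuous'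
    exact ((hxc.comp (continuous_const.add continuous_fst)).dotProduct
      (hPzzc.matrix_mulVec (hxc.comp (continuous_const.add continuous_snd))))
  have step2 :
      (∫ ξ in (-h)..0, (∫ η in (-h)..0, (x (s + ξ) ⬝ᵥ (Pzz ξ η *ᵥ x (s + η)) + p)))
        = (∫ ξ in (-h)..0, (∫ η in (-h)..0, x (s + ξ) ⬝ᵥ (Pzz ξ η *ᵥ x (s + η))))
          + h * (h * p) := by
    rw [intervalIntegral.integral_congr (g := fun ξ =>
      (∫ η in (-h)..0, x (s + ξ) ⬝ᵥ (Pzz ξ η *ᵥ x (s + η))) + h * p) (fun ξ _ => step1 ξ)]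
    rw [intervalIntegral.integral_add (hcontin.intervalIntegrable _ _) intervalIntegrable_const]
    simp [smul_eq_mul, sub_neg_eq_add]
  have hbcont : Continuous fun η => x (s + 0) ⬝ᵥ (Pxz η *ᵥ x (s + η)) :=
    aux_cont_dm continuous_const hPxz hsη
  have step3 :
      (∫ η in (-h)..0, (x (s + 0) ⬝ᵥ (Pxz η *ᵥ x (s + η))
        + ∫ ξ in (-h)..0, ∫ η in (-h)..0, (x (s + ξ) ⬝ᵥ (Pzz ξ η *ᵥ x (s + η))
          + p)))
      = (∫ η in (-h)..0, x (s + 0) ⬝ᵥ (Pxz η *ᵥ x (s + η)))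
        + h * ((∫ ξ in (-h)..0, (∫ η in (-h)..0, x (s + ξ) ⬝ᵥ (Pzz ξ η *ᵥ x (s + η))))
          + h * (h * p)) := by
    rw [intervalIntegral.integral_add (hbcont.intervalIntegrable _ _) intervalIntegrable_const]
    rw [step2]
    simp [smul_eq_mul, sub_neg_eq_add]
    ring
  calc x (s + 0) ⬝ᵥ (Pxx *ᵥ x (s + 0))
      + 2 * ∫ η in (-h)..0, x (s + 0) ⬝ᵥ (Pxz η *ᵥ x (s + η))
      + ∫ ξ in (-h)..0, ∫ η in (-h)..0, x (s + ξ) ⬝ᵥ (Pzz ξ η *ᵥ x (s + η))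
      + ∫ η in (-h)..0, x (s + η) ⬝ᵥ (Pd *ᵥ x (s + η))
      = x (s + 0) ⬝ᵥ (Pxx *ᵥ x (s + 0))
      + 2 * ((∫ η in (-h)..0, x (s + 0) ⬝ᵥ (Pxz η *ᵥ x (s + η)))
        + h * ((∫ ξ in (-h)..0, (∫ η in (-h)..0, x (s + ξ) ⬝ᵥ (Pzz ξ η *ᵥ x (s + η))))
          + h * (h * p))) := by
        rw [← step3]
    _ = _ := by rw [add_zero]; ring

set_option maxHeartbeats 4000000 in
/-- Lemma 4.1 (perturbation effect on the derivative):
D_{(f+g)}V(x_t) = D_f V(y_t) + 2 v(x_t)ᵀ g(x_t) when x_t = y_t. -/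
theorem stmt18 {n : ℕ} (h : ℝ) (hh : 0 < h)
    (Pxx : Matrix (Fin n) (Fin n) ℝ) (hPxx : Pxx.IsSymm)
    (Pxz : ℝ → Matrix (Fin n) (Fin n) ℝ) (hPxz : Continuous Pxz)
    (Pzz : ℝ → ℝ → Matrix (Fin n) (Fin n) ℝ)
    (hPzzc : Continuous fun q : ℝ × ℝ => Pzz q.1 q.2)
    (hPzzsym : ∀ ξ η, (Pzz ξ η).transpose = Pzz η ξ)
    (Pd : Matrix (Fin n) (Fin n) ℝ)
    (f g : (ℝ → Fin n → ℝ) → Fin n → ℝ)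
    (hfseg : ∀ φ ψ : ℝ → Fin n → ℝ, (∀ θ ∈ Set.Icc (-h) (0:ℝ), φ θ = ψ θ) → f φ = f ψ)
    (hgseg : ∀ φ ψ : ℝ → Fin n → ℝ, (∀ θ ∈ Set.Icc (-h) (0:ℝ), φ θ = ψ θ) → g φ = g ψ)
    (x y : ℝ → Fin n → ℝ) (t : ℝ)
    (hx : ∀ s, HasDerivAt x (f (fun θ => x (s + θ)) + g (fun θ => x (s + θ))) s)
    (hy : ∀ s, HasDerivAt y (f (fun θ => y (s + θ))) s)
    (hsame : ∀ θ ∈ Set.Icc (-h) (0:ℝ), x (t + θ) = y (t + θ))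
    (V : (ℝ → Fin n → ℝ) → ℝ)
    (hV : V = fun φ =>
      φ 0 ⬝ᵥ (Pxx *ᵥ φ 0)
      + 2 * ∫ η in (-h)..0, φ 0 ⬝ᵥ (Pxz η *ᵥ φ η)
      + ∫ ξ in (-h)..0, ∫ η in (-h)..0, φ ξ ⬝ᵥ (Pzz ξ η *ᵥ φ η)
      + ∫ η in (-h)..0, φ η ⬝ᵥ (Pd *ᵥ φ η))
    (Dx Dy : ℝ)
    (hDx : HasDerivAt (fun s => V fun θ => x (s + θ)) Dx t)
    (hDy : HasDerivAt (fun s => V fun θ => y (s + θ)) Dy t) :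
    Dx = Dy + 2 * ((Pxx *ᵥ x t + ∫ η in (-h)..0, Pxz η *ᵥ x (t + η)) ⬝ᵥ
      g fun θ => x (t + θ)) := by
  subst hV
  have hmh : -h ≤ (0:ℝ) := by linarith
  have h0mem : (0:ℝ) ∈ Set.Icc (-h) (0:ℝ) := ⟨by linarith, le_refl 0⟩
  have huIcc : Set.uIcc (-h) (0:ℝ) = Set.Icc (-h) (0:ℝ) := Set.uIcc_of_le hmh
  have hxyt : x t = y t := by simpa using hsame 0 h0mem
  have hxc : Continuous x := by
    rw [continuous_iff_continuousAt]; exact fun s => (hx s).continuousAt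
  have hyc : Continuous y := by
    rw [continuous_iff_continuousAt]; exact fun s => (hy s).continuousAt
  set d : ℝ → Fin n → ℝ := fun s => x s - y s with hd
  have hdc : Continuous d := hxc.sub hyc
  have hd0 : ∀ θ ∈ Set.Icc (-h) (0:ℝ), d (t + θ) = 0 := by
    intro θ hθ; simp [hd, hsame θ hθ]
  have hdt : d t = 0 := by simpa using hd0 0 h0mem
  have hdth : d (t - h) = 0 := by
    have := hd0 (-h) ⟨le_refl _, by linarith⟩
    simpa [sub_eq_add_neg] using this
  set g0 : Fin n → ℝ := g fun θ => x (t + θ) with hg0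
  have hd' : HasDerivAt d g0 t := by
    have hfg : f (fun θ => x (t + θ)) = f (fun θ => y (t + θ)) := hfseg _ _ hsame
    have := (hx t).sub (hy t)
    rw [← hfg] at this
    have h3 : HasDerivAt (x - y) g0 t := by simpa using this
    exact h3
  -- the integral term and A
  set I : ℝ → Fin n → ℝ := fun s => ∫ η in (-h)..0, Pxz η *ᵥ x (s + η) with hI
  have hIc : Continuous I := by
    apply intervalIntegral.continuous_parametric_intervalIntegral_of_continuous'
    exact (hPxz.comp continuous_snd).matrix_mulVec (hxc.comp (continuous_fst.add continuous_snd))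
  set A : ℝ → Fin n → ℝ := fun s => Pxx *ᵥ x s + Pxxᵀ *ᵥ y s + (2:ℝ) • I s with hA
  have hAc : Continuous A :=
    ((continuous_const.matrix_mulVec hxc).add (continuous_const.matrix_mulVec hyc)).add
      (show Continuous fun s => (2:ℝ) • I s by fun_prop)
  have hdA : HasDerivAt (fun s => d s ⬝ᵥ A s) (g0 ⬝ᵥ A t) t :=
    aux_dot_deriv hd' hdt hAc.continuousAt
  -- N
  set N : ℝ → ℝ := fun s => ∫ η in (-h)..0, ‖d (s + η)‖ with hN
  have hNrw : ∀ s, N s = (∫ u in (t-1-h)..s, ‖d u‖) - ∫ u in (t-1-h)..(s-h), ‖d u‖ := by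
    intro s
    have h1 : N s = ∫ u in (s + -h)..(s + 0), ‖d u‖ :=
      intervalIntegral.integral_comp_add_left (fun u => ‖d u‖) s
    have h2 : (∫ u in (t-1-h)..(s-h), ‖d u‖) + (∫ u in (s-h)..s, ‖d u‖)
        = ∫ u in (t-1-h)..s, ‖d u‖ :=
      intervalIntegral.integral_add_adjacent_intervals
        (hdc.norm.intervalIntegrable _ _) (hdc.norm.intervalIntegrable _ _)
    rw [h1]
    rw [show s + -h = s - h by ring, show s + (0:ℝ) = s by ring]
    linarith
  have hG : ∀ r : ℝ, HasDerivAt (fun r => ∫ u in (t-1-h)..r, ‖d u‖) ‖d r‖ r := fun r =>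
    (hdc.norm.integral_hasStrictDerivAt _ r).hasDerivAt
  have hN' : HasDerivAt N 0 t := by
    have h2 : HasDerivAt (fun s => ∫ u in (t-1-h)..(s-h), ‖d u‖) (‖d (t-h)‖ * 1) t :=
      by have := (hG (t-h)).comp t ((hasDerivAt_id' t).sub_const h); exact this
    have h3 : HasDerivAt N (‖d t‖ - ‖d (t-h)‖ * 1) t := by
      rw [show N = fun s => (∫ u in (t-1-h)..s, ‖d u‖) - ∫ u in (t-1-h)..(s-h), ‖d u‖ from
        funext hNrw]
      exact (hG t).sub h2
    simpa [hdt, hdth] using h3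
  have hN0 : N t = 0 := by
    have heq : Set.EqOn (fun η => ‖d (t+η)‖) (fun _ => (0:ℝ)) (Set.uIcc (-h) 0) := by
      intro η hη
      rw [huIcc] at hη
      simp [hd0 η hη]
    simp only [hN]
    rw [intervalIntegral.integral_congr heq]
    simp
  have hNnn : ∀ s, 0 ≤ N s := fun s =>
    intervalIntegral.integral_nonneg hmh (fun u _ => norm_nonneg _)
  -- flattened hypotheses
  have hDx0 : HasDerivAt (fun s =>
      x s ⬝ᵥ (Pxx *ᵥ x s)
      + 2 * (∫ η in (-h)..0, x s ⬝ᵥ (Pxz η *ᵥ x (s + η)))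
      + (2*h) * (∫ ξ in (-h)..0, (∫ η in (-h)..0, x (s + ξ) ⬝ᵥ (Pzz ξ η *ᵥ x (s + η))))
      + (2*h*h*h) * (∫ η in (-h)..0, x (s + η) ⬝ᵥ (Pd *ᵥ x (s + η)))) Dx t := by
    have h0 : HasDerivAt (fun s =>
      x (s + 0) ⬝ᵥ (Pxx *ᵥ x (s + 0))
      + 2 * ∫ η in (-h)..0, x (s + 0) ⬝ᵥ (Pxz η *ᵥ x (s + η))
      + ∫ ξ in (-h)..0, ∫ η in (-h)..0, x (s + ξ) ⬝ᵥ (Pzz ξ η *ᵥ x (s + η))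
      + ∫ η in (-h)..0, x (s + η) ⬝ᵥ (Pd *ᵥ x (s + η))) Dx t := hDx
    rwa [funext fun s => aux_flatten Pxx Pd Pxz hPxz Pzz hPzzc x hxc s] at h0
  have hDy0 : HasDerivAt (fun s =>
      y s ⬝ᵥ (Pxx *ᵥ y s)
      + 2 * (∫ η in (-h)..0, y s ⬝ᵥ (Pxz η *ᵥ y (s + η)))
      + (2*h) * (∫ ξ in (-h)..0, (∫ η in (-h)..0, y (s + ξ) ⬝ᵥ (Pzz ξ η *ᵥ y (s + η))))
      + (2*h*h*h) * (∫ η in (-h)..0, y (s + η) ⬝ᵥ (Pd *ᵥ y (s + η)))) Dy t := by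
    have h0 : HasDerivAt (fun s =>
      y (s + 0) ⬝ᵥ (Pxx *ᵥ y (s + 0))
      + 2 * ∫ η in (-h)..0, y (s + 0) ⬝ᵥ (Pxz η *ᵥ y (s + η))
      + ∫ ξ in (-h)..0, ∫ η in (-h)..0, y (s + ξ) ⬝ᵥ (Pzz ξ η *ᵥ y (s + η))
      + ∫ η in (-h)..0, y (s + η) ⬝ᵥ (Pd *ᵥ y (s + η))) Dy t := hDy
    rwa [funext fun s => aux_flatten Pxx Pd Pxz hPxz Pzz hPzzc y hyc s] at h0
  -- constants
  obtain ⟨Kx, hKx⟩ := (isCompact_Icc (a := t-1-h) (b := t+1)).exists_bound_of_continuousOn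
    hxc.continuousOn
  obtain ⟨Ky, hKy⟩ := (isCompact_Icc (a := t-1-h) (b := t+1)).exists_bound_of_continuousOn
    hyc.continuousOn
  obtain ⟨C1, hC1⟩ := aux_entry_bound hPxz (isCompact_Icc (a := -h) (b := (0:ℝ)))
  obtain ⟨C2, hC2⟩ := aux_entry_bound hPzzc
    ((isCompact_Icc (a := -h) (b := (0:ℝ))).prod (isCompact_Icc (a := -h) (b := (0:ℝ))))
  obtain ⟨C3, hC3'⟩ := aux_entry_bound (continuous_const : Continuous fun _ : ℝ => Pd)
    (isCompact_Icc (a := -h) (b := (0:ℝ)))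
  have hC3 : ∀ i j, |Pd i j| ≤ C3 := fun i j => hC3' (-h) ⟨le_refl _, hmh⟩ i j
  set Ka := max Kx Ky with hKa
  have hxb : ∀ u ∈ Set.Icc (t-1-h) (t+1), ∀ i, |x u i| ≤ Ka := fun u hu i => by
    have h1 : ‖x u i‖ ≤ ‖x u‖ := norm_le_pi_norm (x u) i
    rw [Real.norm_eq_abs] at h1
    exact h1.trans ((hKx u hu).trans (le_max_left _ _))
  have hyb : ∀ u ∈ Set.Icc (t-1-h) (t+1), ∀ i, |y u i| ≤ Ka := fun u hu i => by
    have h1 : ‖y u i‖ ≤ ‖y u‖ := norm_le_pi_norm (y u) i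
    rw [Real.norm_eq_abs] at h1
    exact h1.trans ((hKy u hu).trans (le_max_right _ _))
  have hdb : ∀ u : ℝ, ∀ i, |d u i| ≤ ‖d u‖ := fun u i => by
    have h1 : ‖d u i‖ ≤ ‖d u‖ := norm_le_pi_norm (d u) i
    rwa [Real.norm_eq_abs] at h1
  set cc1 := (n:ℝ)^2 * Ka * C1 with hcc1
  set cc2 := (n:ℝ)^2 * Ka * C2 with hcc2
  set cc3 := (n:ℝ)^2 * Ka * C3 with hcc3
  -- remainder function
  set Rf : ℝ → ℝ := fun s =>
      (x s ⬝ᵥ (Pxx *ᵥ x s)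
      + 2 * (∫ η in (-h)..0, x s ⬝ᵥ (Pxz η *ᵥ x (s + η)))
      + (2*h) * (∫ ξ in (-h)..0, (∫ η in (-h)..0, x (s + ξ) ⬝ᵥ (Pzz ξ η *ᵥ x (s + η))))
      + (2*h*h*h) * (∫ η in (-h)..0, x (s + η) ⬝ᵥ (Pd *ᵥ x (s + η))))
      - (y s ⬝ᵥ (Pxx *ᵥ y s)
      + 2 * (∫ η in (-h)..0, y s ⬝ᵥ (Pxz η *ᵥ y (s + η)))
      + (2*h) * (∫ ξ in (-h)..0, (∫ η in (-h)..0, y (s + ξ) ⬝ᵥ (Pzz ξ η *ᵥ y (s + η))))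
      + (2*h*h*h) * (∫ η in (-h)..0, y (s + η) ⬝ᵥ (Pd *ᵥ y (s + η))))
      - d s ⬝ᵥ A s
    with hRf
  have hsplit : ∀ s : ℝ, Rf s
      = 2 * (∫ η in (-h)..0, y s ⬝ᵥ (Pxz η *ᵥ d (s + η)))
      + (2*h) * (∫ ξ in (-h)..0, (∫ η in (-h)..0,
          (d (s + ξ) ⬝ᵥ (Pzz ξ η *ᵥ x (s + η)) + y (s + ξ) ⬝ᵥ (Pzz ξ η *ᵥ d (s + η)))))
      + (2*h*h*h) * (∫ η in (-h)..0,
          (d (s + η) ⬝ᵥ (Pd *ᵥ x (s + η)) + y (s + η) ⬝ᵥ (Pd *ᵥ d (s + η)))) := by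
    intro s
    have hxs : Continuous fun η : ℝ => x (s + η) := hxc.comp (continuous_const.add continuous_id)
    have hys : Continuous fun η : ℝ => y (s + η) := hyc.comp (continuous_const.add continuous_id)
    have hds : Continuous fun η : ℝ => d (s + η) := hdc.comp (continuous_const.add continuous_id)
    have e1 : d s ⬝ᵥ (Pxx *ᵥ x s) = x s ⬝ᵥ (Pxx *ᵥ x s) - y s ⬝ᵥ (Pxx *ᵥ x s) := by
      simp [hd, sub_dotProduct]
    have e2 : d s ⬝ᵥ (Pxxᵀ *ᵥ y s) = y s ⬝ᵥ (Pxx *ᵥ x s) - y s ⬝ᵥ (Pxx *ᵥ y s) := by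
      rw [aux_dot_mulVec_transpose]
      simp [hd, Matrix.mulVec_sub, dotProduct_sub]
    have hintx : IntervalIntegrable (fun η => x s ⬝ᵥ (Pxz η *ᵥ x (s + η)))
        MeasureTheory.volume (-h) 0 :=
      (aux_cont_dm continuous_const hPxz hxs).intervalIntegrable _ _
    have hinty : IntervalIntegrable (fun η => y s ⬝ᵥ (Pxz η *ᵥ y (s + η)))
        MeasureTheory.volume (-h) 0 :=
      (aux_cont_dm continuous_const hPxz hys).intervalIntegrable _ _
    have hintd : IntervalIntegrable (fun η => d s ⬝ᵥ (Pxz η *ᵥ x (s + η)))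
        MeasureTheory.volume (-h) 0 :=
      (aux_cont_dm continuous_const hPxz hxs).intervalIntegrable _ _
    have ecross : (∫ η in (-h)..0, x s ⬝ᵥ (Pxz η *ᵥ x (s + η)))
        - (∫ η in (-h)..0, y s ⬝ᵥ (Pxz η *ᵥ y (s + η)))
        - d s ⬝ᵥ I s
        = ∫ η in (-h)..0, y s ⬝ᵥ (Pxz η *ᵥ d (s + η)) := by
      have hIs : d s ⬝ᵥ I s = ∫ η in (-h)..0, d s ⬝ᵥ (Pxz η *ᵥ x (s + η)) := by
        simp only [hI]
        exact aux_dot_integral (d s) _ (hPxz.matrix_mulVec hxs) _ _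
      rw [hIs, ← intervalIntegral.integral_sub hintx hinty,
        ← intervalIntegral.integral_sub (hintx.sub hinty) hintd]
      apply intervalIntegral.integral_congr
      intro η _
      simp only [hd, Pi.sub_apply, sub_dotProduct, Matrix.mulVec_sub,
        dotProduct_sub]
      ring
    have hjx : Continuous fun ξ => ∫ η in (-h)..0, x (s + ξ) ⬝ᵥ (Pzz ξ η *ᵥ x (s + η)) := by
      apply intervalIntegral.continuous_parametric_intervalIntegral_of_continuous'
      exact ((hxc.comp (continuous_const.add continuous_fst)).dotProduct
        (hPzzc.matrix_mulVec (hxc.comp (continuous_const.add continuous_snd))))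
    have hjy : Continuous fun ξ => ∫ η in (-h)..0, y (s + ξ) ⬝ᵥ (Pzz ξ η *ᵥ y (s + η)) := by
      apply intervalIntegral.continuous_parametric_intervalIntegral_of_continuous'
      exact ((hyc.comp (continuous_const.add continuous_fst)).dotProduct
        (hPzzc.matrix_mulVec (hyc.comp (continuous_const.add continuous_snd))))
    have edbl : (∫ ξ in (-h)..0, (∫ η in (-h)..0, x (s + ξ) ⬝ᵥ (Pzz ξ η *ᵥ x (s + η))))
        - (∫ ξ in (-h)..0, (∫ η in (-h)..0, y (s + ξ) ⬝ᵥ (Pzz ξ η *ᵥ y (s + η))))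
        = ∫ ξ in (-h)..0, (∫ η in (-h)..0,
            (d (s + ξ) ⬝ᵥ (Pzz ξ η *ᵥ x (s + η)) + y (s + ξ) ⬝ᵥ (Pzz ξ η *ᵥ d (s + η)))) := by
      rw [← intervalIntegral.integral_sub (hjx.intervalIntegrable _ _)
        (hjy.intervalIntegrable _ _)]
      apply intervalIntegral.integral_congr
      intro ξ _
      have hia : IntervalIntegrable (fun η => x (s + ξ) ⬝ᵥ (Pzz ξ η *ᵥ x (s + η)))
          MeasureTheory.volume (-h) 0 := by
        apply Continuous.intervalIntegrable
        exact aux_cont_dm continuous_const (hPzzc.comp (Continuous.prodMk_right ξ)) hxs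
      have hib : IntervalIntegrable (fun η => y (s + ξ) ⬝ᵥ (Pzz ξ η *ᵥ y (s + η)))
          MeasureTheory.volume (-h) 0 := by
        apply Continuous.intervalIntegrable
        exact aux_cont_dm continuous_const (hPzzc.comp (Continuous.prodMk_right ξ)) hys
      show (∫ η in (-h)..0, x (s + ξ) ⬝ᵥ (Pzz ξ η *ᵥ x (s + η)))
          - (∫ η in (-h)..0, y (s + ξ) ⬝ᵥ (Pzz ξ η *ᵥ y (s + η)))
          = ∫ η in (-h)..0,
            (d (s + ξ) ⬝ᵥ (Pzz ξ η *ᵥ x (s + η)) + y (s + ξ) ⬝ᵥ (Pzz ξ η *ᵥ d (s + η)))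
      rw [← intervalIntegral.integral_sub hia hib]
      apply intervalIntegral.integral_congr
      intro η _
      simp only [hd, Pi.sub_apply, sub_dotProduct, Matrix.mulVec_sub,
        dotProduct_sub]
      ring
    have epd : (∫ η in (-h)..0, x (s + η) ⬝ᵥ (Pd *ᵥ x (s + η)))
        - (∫ η in (-h)..0, y (s + η) ⬝ᵥ (Pd *ᵥ y (s + η)))
        = ∫ η in (-h)..0,
            (d (s + η) ⬝ᵥ (Pd *ᵥ x (s + η)) + y (s + η) ⬝ᵥ (Pd *ᵥ d (s + η))) := by
      rw [← intervalIntegral.integral_sub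
        ((aux_cont_dm hxs continuous_const hxs).intervalIntegrable _ _)
        ((aux_cont_dm hys continuous_const hys).intervalIntegrable _ _)]
      apply intervalIntegral.integral_congr
      intro η _
      simp only [hd, Pi.sub_apply, sub_dotProduct, Matrix.mulVec_sub,
        dotProduct_sub]
      ring
    have hAval : d s ⬝ᵥ A s = d s ⬝ᵥ (Pxx *ᵥ x s) + d s ⬝ᵥ (Pxxᵀ *ᵥ y s) + 2 * (d s ⬝ᵥ I s) := by
      simp only [hA, dotProduct_add, dotProduct_smul, smul_eq_mul]
    simp only [hRf]
    rw [hAval]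
    linear_combination (-1 : ℝ) * e1 + (-1 : ℝ) * e2 + 2 * ecross + (2*h) * edbl + (2*h*h*h) * epd
  have hRt : Rf t = 0 := by
    have e2' : (∫ η in (-h)..0, x t ⬝ᵥ (Pxz η *ᵥ x (t + η)))
        = ∫ η in (-h)..0, y t ⬝ᵥ (Pxz η *ᵥ y (t + η)) := by
      apply intervalIntegral.integral_congr
      intro η hη
      rw [huIcc] at hη
      simp only [hxyt, hsame η hη]
    have e3' : (∫ ξ in (-h)..0, (∫ η in (-h)..0, x (t + ξ) ⬝ᵥ (Pzz ξ η *ᵥ x (t + η))))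
        = ∫ ξ in (-h)..0, (∫ η in (-h)..0, y (t + ξ) ⬝ᵥ (Pzz ξ η *ᵥ y (t + η))) := by
      apply intervalIntegral.integral_congr
      intro ξ hξ
      rw [huIcc] at hξ
      apply intervalIntegral.integral_congr
      intro η hη
      rw [huIcc] at hη
      simp only [hsame ξ hξ, hsame η hη]
    have e4' : (∫ η in (-h)..0, x (t + η) ⬝ᵥ (Pd *ᵥ x (t + η)))
        = ∫ η in (-h)..0, y (t + η) ⬝ᵥ (Pd *ᵥ y (t + η)) := by
      apply intervalIntegral.integral_congr
      intro η hη
      rw [huIcc] at hη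
      simp only [hsame η hη]
    simp only [hRf]
    rw [e2', e3', e4', hxyt, hdt]
    simp
  have hbound : ∀ᶠ s in nhds t,
      |Rf s| ≤ (2*cc1 + 4*h*h*cc2 + 4*h*h*h*cc3) * N s := by
    filter_upwards [Ioo_mem_nhds (show t-1 < t by linarith) (show t < t+1 by linarith)]
      with s hs
    obtain ⟨hs1, hs2⟩ := hs
    have hmem : ∀ η ∈ Set.Icc (-h) (0:ℝ), s + η ∈ Set.Icc (t-1-h) (t+1) := by
      intro η hη
      exact ⟨by linarith [hη.1, hη.2], by linarith [hη.1, hη.2]⟩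
    have hsmem : s ∈ Set.Icc (t-1-h) (t+1) := ⟨by linarith, by linarith⟩
    have hds : Continuous fun η : ℝ => d (s + η) := hdc.comp (continuous_const.add continuous_id)
    have hxs' : Continuous fun η : ℝ => x (s + η) := hxc.comp (continuous_const.add continuous_id)
    have hys' : Continuous fun η : ℝ => y (s + η) := hyc.comp (continuous_const.add continuous_id)
    rw [hsplit s]
    have bc : |∫ η in (-h)..0, y s ⬝ᵥ (Pxz η *ᵥ d (s + η))| ≤ cc1 * N s := by
      have hic : IntervalIntegrable (fun η => |y s ⬝ᵥ (Pxz η *ᵥ d (s + η))|)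
          MeasureTheory.volume (-h) 0 := by
        apply Continuous.intervalIntegrable
        exact (aux_cont_dm continuous_const hPxz hds).abs
      have hic2 : IntervalIntegrable (fun η => cc1 * ‖d (s + η)‖) MeasureTheory.volume (-h) 0 :=
        (continuous_const.mul hds.norm).intervalIntegrable _ _
      calc |∫ η in (-h)..0, y s ⬝ᵥ (Pxz η *ᵥ d (s + η))|
          ≤ ∫ η in (-h)..0, |y s ⬝ᵥ (Pxz η *ᵥ d (s + η))| :=
            intervalIntegral.abs_integral_le_integral_abs hmh
        _ ≤ ∫ η in (-h)..0, cc1 * ‖d (s + η)‖ := by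
            apply intervalIntegral.integral_mono_on hmh hic hic2
            intro η hη
            calc |y s ⬝ᵥ (Pxz η *ᵥ d (s + η))|
                ≤ (n:ℝ)^2 * Ka * C1 * ‖d (s + η)‖ :=
                  aux_abs_dot_mulVec_le (fun i => hyb s hsmem i) (fun i j => hC1 η hη i j)
                    (fun j => hdb (s + η) j)
              _ = cc1 * ‖d (s + η)‖ := by rw [hcc1]
        _ = cc1 * N s := by rw [intervalIntegral.integral_const_mul]
    have bpd : |∫ η in (-h)..0,
        (d (s + η) ⬝ᵥ (Pd *ᵥ x (s + η)) + y (s + η) ⬝ᵥ (Pd *ᵥ d (s + η)))| ≤ 2 * cc3 * N s := by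
      have hcontpd : Continuous fun η : ℝ =>
          d (s + η) ⬝ᵥ (Pd *ᵥ x (s + η)) + y (s + η) ⬝ᵥ (Pd *ᵥ d (s + η)) :=
        (aux_cont_dm hds continuous_const hxs').add (aux_cont_dm hys' continuous_const hds)
      calc |∫ η in (-h)..0, (d (s + η) ⬝ᵥ (Pd *ᵥ x (s + η)) + y (s + η) ⬝ᵥ (Pd *ᵥ d (s + η)))|
          ≤ ∫ η in (-h)..0,
            |d (s + η) ⬝ᵥ (Pd *ᵥ x (s + η)) + y (s + η) ⬝ᵥ (Pd *ᵥ d (s + η))| :=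
            intervalIntegral.abs_integral_le_integral_abs hmh
        _ ≤ ∫ η in (-h)..0, 2 * cc3 * ‖d (s + η)‖ := by
            apply intervalIntegral.integral_mono_on hmh (hcontpd.abs.intervalIntegrable _ _)
              ((continuous_const.mul hds.norm).intervalIntegrable _ _)
            intro η hη
            have i1 : |d (s + η) ⬝ᵥ (Pd *ᵥ x (s + η))| ≤ (n:ℝ)^2 * ‖d (s + η)‖ * C3 * Ka :=
              aux_abs_dot_mulVec_le (fun i => hdb (s + η) i) (fun i j => hC3 i j)
                (fun j => hxb (s + η) (hmem η hη) j)
            have i2 : |y (s + η) ⬝ᵥ (Pd *ᵥ d (s + η))| ≤ (n:ℝ)^2 * Ka * C3 * ‖d (s + η)‖ :=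
              aux_abs_dot_mulVec_le (fun i => hyb (s + η) (hmem η hη) i) (fun i j => hC3 i j)
                (fun j => hdb (s + η) j)
            calc |d (s + η) ⬝ᵥ (Pd *ᵥ x (s + η)) + y (s + η) ⬝ᵥ (Pd *ᵥ d (s + η))|
                ≤ |d (s + η) ⬝ᵥ (Pd *ᵥ x (s + η))| + |y (s + η) ⬝ᵥ (Pd *ᵥ d (s + η))| :=
                  abs_add_le _ _
              _ ≤ (n:ℝ)^2 * ‖d (s + η)‖ * C3 * Ka + (n:ℝ)^2 * Ka * C3 * ‖d (s + η)‖ :=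
                  add_le_add i1 i2
              _ = 2 * cc3 * ‖d (s + η)‖ := by rw [hcc3]; ring
        _ = 2 * cc3 * N s := by rw [intervalIntegral.integral_const_mul]
    have hdscont : ∀ ξ : ℝ, Continuous fun η : ℝ =>
        d (s + ξ) ⬝ᵥ (Pzz ξ η *ᵥ x (s + η)) + y (s + ξ) ⬝ᵥ (Pzz ξ η *ᵥ d (s + η)) := fun ξ =>
      (aux_cont_dm continuous_const (hPzzc.comp (Continuous.prodMk_right ξ)) hxs').add
        (aux_cont_dm continuous_const (hPzzc.comp (Continuous.prodMk_right ξ)) hds)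
    have hj : Continuous fun ξ => ∫ η in (-h)..0,
        (d (s + ξ) ⬝ᵥ (Pzz ξ η *ᵥ x (s + η)) + y (s + ξ) ⬝ᵥ (Pzz ξ η *ᵥ d (s + η))) := by
      apply intervalIntegral.continuous_parametric_intervalIntegral_of_continuous'
      exact ((hdc.comp (continuous_const.add continuous_fst)).dotProduct
          (hPzzc.matrix_mulVec (hxc.comp (continuous_const.add continuous_snd)))).add
        ((hyc.comp (continuous_const.add continuous_fst)).dotProduct
          (hPzzc.matrix_mulVec (hdc.comp (continuous_const.add continuous_snd))))
    have binner : ∀ ξ ∈ Set.Icc (-h) (0:ℝ),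
        |∫ η in (-h)..0,
          (d (s + ξ) ⬝ᵥ (Pzz ξ η *ᵥ x (s + η)) + y (s + ξ) ⬝ᵥ (Pzz ξ η *ᵥ d (s + η)))|
        ≤ h * (cc2 * ‖d (s + ξ)‖) + cc2 * N s := by
      intro ξ hξ
      calc |∫ η in (-h)..0,
            (d (s + ξ) ⬝ᵥ (Pzz ξ η *ᵥ x (s + η)) + y (s + ξ) ⬝ᵥ (Pzz ξ η *ᵥ d (s + η)))|
          ≤ ∫ η in (-h)..0,
            |d (s + ξ) ⬝ᵥ (Pzz ξ η *ᵥ x (s + η)) + y (s + ξ) ⬝ᵥ (Pzz ξ η *ᵥ d (s + η))| :=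
            intervalIntegral.abs_integral_le_integral_abs hmh
        _ ≤ ∫ η in (-h)..0, (cc2 * ‖d (s + ξ)‖ + cc2 * ‖d (s + η)‖) := by
            apply intervalIntegral.integral_mono_on hmh
              ((hdscont ξ).abs.intervalIntegrable _ _)
              ((continuous_const.add (continuous_const.mul hds.norm)).intervalIntegrable _ _)
            intro η hη
            have i1 : |d (s + ξ) ⬝ᵥ (Pzz ξ η *ᵥ x (s + η))|
                ≤ (n:ℝ)^2 * ‖d (s + ξ)‖ * C2 * Ka :=
              aux_abs_dot_mulVec_le (fun i => hdb (s + ξ) i)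
                (fun i j => hC2 (ξ, η) ⟨hξ, hη⟩ i j) (fun j => hxb (s + η) (hmem η hη) j)
            have i2 : |y (s + ξ) ⬝ᵥ (Pzz ξ η *ᵥ d (s + η))|
                ≤ (n:ℝ)^2 * Ka * C2 * ‖d (s + η)‖ :=
              aux_abs_dot_mulVec_le (fun i => hyb (s + ξ) (hmem ξ hξ) i)
                (fun i j => hC2 (ξ, η) ⟨hξ, hη⟩ i j) (fun j => hdb (s + η) j)
            calc |d (s + ξ) ⬝ᵥ (Pzz ξ η *ᵥ x (s + η)) + y (s + ξ) ⬝ᵥ (Pzz ξ η *ᵥ d (s + η))|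
                ≤ |d (s + ξ) ⬝ᵥ (Pzz ξ η *ᵥ x (s + η))|
                  + |y (s + ξ) ⬝ᵥ (Pzz ξ η *ᵥ d (s + η))| := abs_add_le _ _
              _ ≤ (n:ℝ)^2 * ‖d (s + ξ)‖ * C2 * Ka + (n:ℝ)^2 * Ka * C2 * ‖d (s + η)‖ :=
                  add_le_add i1 i2
              _ = cc2 * ‖d (s + ξ)‖ + cc2 * ‖d (s + η)‖ := by rw [hcc2]; ring
        _ = h * (cc2 * ‖d (s + ξ)‖) + cc2 * N s := by
            rw [intervalIntegral.integral_add (g := fun η => cc2 * ‖d (s + η)‖) intervalIntegrable_const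
              ((continuous_const.mul hds.norm).intervalIntegrable _ _),
              intervalIntegral.integral_const, intervalIntegral.integral_const_mul]
            simp only [hN]
            simp [smul_eq_mul, sub_neg_eq_add]
    have bdbl : |∫ ξ in (-h)..0, (∫ η in (-h)..0,
          (d (s + ξ) ⬝ᵥ (Pzz ξ η *ᵥ x (s + η)) + y (s + ξ) ⬝ᵥ (Pzz ξ η *ᵥ d (s + η))))|
        ≤ h * (cc2 * N s) + h * (cc2 * N s) := by
      have hdξ : Continuous fun ξ : ℝ => d (s + ξ) :=
        hdc.comp (continuous_const.add continuous_id)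
      calc |∫ ξ in (-h)..0, (∫ η in (-h)..0,
            (d (s + ξ) ⬝ᵥ (Pzz ξ η *ᵥ x (s + η)) + y (s + ξ) ⬝ᵥ (Pzz ξ η *ᵥ d (s + η))))|
          ≤ ∫ ξ in (-h)..0, |∫ η in (-h)..0,
            (d (s + ξ) ⬝ᵥ (Pzz ξ η *ᵥ x (s + η)) + y (s + ξ) ⬝ᵥ (Pzz ξ η *ᵥ d (s + η)))| :=
            intervalIntegral.abs_integral_le_integral_abs hmh
        _ ≤ ∫ ξ in (-h)..0, (h * (cc2 * ‖d (s + ξ)‖) + cc2 * N s) :=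
            intervalIntegral.integral_mono_on hmh (hj.abs.intervalIntegrable _ _)
              (((continuous_const.mul (continuous_const.mul hdξ.norm)).add
                continuous_const).intervalIntegrable _ _) binner
        _ = h * (cc2 * N s) + h * (cc2 * N s) := by
            rw [intervalIntegral.integral_add (f := fun ξ => h * (cc2 * ‖d (s + ξ)‖))
              ((continuous_const.mul (continuous_const.mul hdξ.norm)).intervalIntegrable _ _)
              intervalIntegrable_const,
              intervalIntegral.integral_const_mul, intervalIntegral.integral_const_mul,
              intervalIntegral.integral_const]
            simp only [hN]
            simp [smul_eq_mul, sub_neg_eq_add]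
    calc |2 * (∫ η in (-h)..0, y s ⬝ᵥ (Pxz η *ᵥ d (s + η)))
        + (2*h) * (∫ ξ in (-h)..0, (∫ η in (-h)..0,
            (d (s + ξ) ⬝ᵥ (Pzz ξ η *ᵥ x (s + η)) + y (s + ξ) ⬝ᵥ (Pzz ξ η *ᵥ d (s + η)))))
        + (2*h*h*h) * (∫ η in (-h)..0,
            (d (s + η) ⬝ᵥ (Pd *ᵥ x (s + η)) + y (s + η) ⬝ᵥ (Pd *ᵥ d (s + η))))|
        ≤ |2 * (∫ η in (-h)..0, y s ⬝ᵥ (Pxz η *ᵥ d (s + η)))|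
        + |(2*h) * (∫ ξ in (-h)..0, (∫ η in (-h)..0,
            (d (s + ξ) ⬝ᵥ (Pzz ξ η *ᵥ x (s + η)) + y (s + ξ) ⬝ᵥ (Pzz ξ η *ᵥ d (s + η)))))|
        + |(2*h*h*h) * (∫ η in (-h)..0,
            (d (s + η) ⬝ᵥ (Pd *ᵥ x (s + η)) + y (s + η) ⬝ᵥ (Pd *ᵥ d (s + η))))| :=
          abs_add_three _ _ _
      _ = 2 * |∫ η in (-h)..0, y s ⬝ᵥ (Pxz η *ᵥ d (s + η))|
        + (2*h) * |∫ ξ in (-h)..0, (∫ η in (-h)..0,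
            (d (s + ξ) ⬝ᵥ (Pzz ξ η *ᵥ x (s + η)) + y (s + ξ) ⬝ᵥ (Pzz ξ η *ᵥ d (s + η))))|
        + (2*h*h*h) * |∫ η in (-h)..0,
            (d (s + η) ⬝ᵥ (Pd *ᵥ x (s + η)) + y (s + η) ⬝ᵥ (Pd *ᵥ d (s + η)))| := by
          rw [abs_mul 2, abs_mul (2*h), abs_mul (2*h*h*h),
            abs_of_pos (show (0:ℝ) < 2 by norm_num),
            abs_of_pos (show (0:ℝ) < 2*h by linarith),
            abs_of_pos (show (0:ℝ) < 2*h*h*h by positivity)]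
      _ ≤ 2 * (cc1 * N s) + (2*h) * (h * (cc2 * N s) + h * (cc2 * N s))
          + (2*h*h*h) * (2 * cc3 * N s) := by
          have w1 : (0:ℝ) ≤ 2 := by norm_num
          have w2 : (0:ℝ) ≤ 2*h := by linarith
          have w3 : (0:ℝ) ≤ 2*h*h*h := by positivity
          exact add_le_add (add_le_add (mul_le_mul_of_nonneg_left bc w1)
            (mul_le_mul_of_nonneg_left bdbl w2)) (mul_le_mul_of_nonneg_left bpd w3)
      _ = (2*cc1 + 4*h*h*cc2 + 4*h*h*h*cc3) * N s := by ring
  have hR0 : HasDerivAt Rf 0 t := aux_squeeze_deriv hN' hN0 hRt hbound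
  have hfun : (fun s => d s ⬝ᵥ A s + Rf s) = fun s =>
      (x s ⬝ᵥ (Pxx *ᵥ x s)
      + 2 * (∫ η in (-h)..0, x s ⬝ᵥ (Pxz η *ᵥ x (s + η)))
      + (2*h) * (∫ ξ in (-h)..0, (∫ η in (-h)..0, x (s + ξ) ⬝ᵥ (Pzz ξ η *ᵥ x (s + η))))
      + (2*h*h*h) * (∫ η in (-h)..0, x (s + η) ⬝ᵥ (Pd *ᵥ x (s + η))))
      - (y s ⬝ᵥ (Pxx *ᵥ y s)
      + 2 * (∫ η in (-h)..0, y s ⬝ᵥ (Pxz η *ᵥ y (s + η)))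
      + (2*h) * (∫ ξ in (-h)..0, (∫ η in (-h)..0, y (s + ξ) ⬝ᵥ (Pzz ξ η *ᵥ y (s + η))))
      + (2*h*h*h) * (∫ η in (-h)..0, y (s + η) ⬝ᵥ (Pd *ᵥ y (s + η)))) := by
    funext s
    simp only [hRf]
    ring
  have hkey : HasDerivAt (fun s => d s ⬝ᵥ A s + Rf s) (g0 ⬝ᵥ A t + 0) t := hdA.add hR0
  rw [hfun] at hkey
  have huniq : Dx - Dy = g0 ⬝ᵥ A t + 0 := (hDx0.sub hDy0).unique hkey
  have hAt : g0 ⬝ᵥ A t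
      = 2 * ((Pxx *ᵥ x t + ∫ η in (-h)..0, Pxz η *ᵥ x (t + η)) ⬝ᵥ g0) := by
    have hIt : I t = ∫ η in (-h)..0, Pxz η *ᵥ x (t + η) := by simp only [hI]
    simp only [hA, hIt]
    rw [← hxyt, hPxx]
    have hco : (Pxx *ᵥ x t + ∫ η in (-h)..0, Pxz η *ᵥ x (t + η)) ⬝ᵥ g0
        = g0 ⬝ᵥ (Pxx *ᵥ x t) + g0 ⬝ᵥ (∫ η in (-h)..0, Pxz η *ᵥ x (t + η)) := by
      rw [dotProduct_comm, dotProduct_add]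
    rw [hco, dotProduct_add, dotProduct_add, dotProduct_smul, smul_eq_mul]
    ring
  linarith [huniq, hAt]
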